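/- Under the adjoint error residual equations, the adjoint optimality error satisfies τ·∑_{k=1}^{K} ‖e_p^k‖² ≤ (2τ/α²)·∑_{k=1}^{K} ‖r_p^k‖_{Y'}² + (2 C_D² σ₁² τ/α²)·∑_{k=1}^{K} (e_y^k, e_y^k)_D + (σ₂²/α)·(e_y^K, e_y^K)_D. -/

import Mathlib

lemma young_abs_aux {A B X : ℝ} (hA : 0 ≤ A) (hB : 0 ≤ B) (h : X ^ 2 ≤ 4 * A * B) :
    -X ≤ A + B := by
  nlinarith [sq_nonneg (A - B), sq_nonneg (A + B + X)]

lemma telescope_aux (f : ℕ → ℝ) (n : ℕ) :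
    ∑ k ∈ Finset.Icc 1 n, (f k - f (k + 1)) = f 1 - f (n + 1) := by
  induction n with
  | zero => simp
  | succ m ih => rw [Finset.sum_Icc_succ_top (by omega), ih]; ring

set_option maxHeartbeats 1000000 in
/-- Norm estimate for the adjoint optimality error under the adjoint error residual
equations (Lemma on the adjoint optimality error, second estimate). -/
theorem adjoint_error_norm_estimate
    {Y : Type*} [NormedAddCommGroup Y] [NormedSpace ℝ Y]
    {K : ℕ} (hK : 1 ≤ K) {τ α : ℝ} (hτ : 0 < τ) (hα : 0 < α)
    (a mm D : Y →ₗ[ℝ] Y →ₗ[ℝ] ℝ)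
    (ha : ∀ v : Y, α * ‖v‖ ^ 2 ≤ a v v)
    (hmsymm : ∀ v w : Y, mm v w = mm w v)
    (hmpos : ∀ v : Y, 0 ≤ mm v v)
    (hDsymm : ∀ v w : Y, D v w = D w v)
    (hDpos : ∀ v : Y, 0 ≤ D v v)
    (hDm : ∀ v : Y, D v v ≤ mm v v)
    {CD σ1 σ2 : ℝ} (hCD : 0 ≤ CD) (hσ1 : 0 ≤ σ1) (hσ2 : 0 ≤ σ2)
    (hDC : ∀ v : Y, D v v ≤ CD ^ 2 * ‖v‖ ^ 2)
    (ey ep : ℕ → Y) (rp : ℕ → Y →L[ℝ] ℝ)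
    (hres : ∀ k ∈ Finset.Icc 1 (K - 1), ∀ φ : Y,
      mm φ (ep k - ep (k + 1)) + τ * a φ (ep k) + τ * σ1 * D (ey k) φ = τ * rp k φ)
    (hresK : ∀ φ : Y,
      mm φ (ep K) + τ * a φ (ep K) + (τ * σ1 + σ2) * D (ey K) φ = τ * rp K φ) :
    τ * ∑ k ∈ Finset.Icc 1 K, ‖ep k‖ ^ 2
      ≤ (2 * τ / α ^ 2) * ∑ k ∈ Finset.Icc 1 K, ‖rp k‖ ^ 2
        + (2 * CD ^ 2 * σ1 ^ 2 * τ / α ^ 2) * ∑ k ∈ Finset.Icc 1 K, D (ey k) (ey k)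
        + (σ2 ^ 2 / α) * D (ey K) (ey K) := by
  obtain ⟨m, rfl⟩ : ∃ m, K = m + 1 := ⟨K - 1, by omega⟩
  simp only [Nat.add_sub_cancel] at hres
  -- Cauchy–Schwarz for D
  have hCS : ∀ u v : Y, (D u v) ^ 2 ≤ D u u * D v v := by
    intro u v
    have key : ∀ s : ℝ, 0 ≤ D u u * (s * s) + (2 * D u v) * s + D v v := by
      intro s
      have h0 := hDpos (s • u + v)
      simp only [map_add, map_smul, LinearMap.add_apply, LinearMap.smul_apply,
        smul_eq_mul] at h0
      rw [hDsymm v u] at h0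
      nlinarith [h0]
    have hd := discrim_le_zero key
    rw [discrim] at hd
    nlinarith [hd]
  -- Young-type bound using CD
  have hDb : ∀ (c : ℝ), 0 ≤ c → ∀ u v : Y,
      -(c * D u v) ≤ c ^ 2 * CD ^ 2 / α * D u u + α / 4 * ‖v‖ ^ 2 := by
    intro c hc u v
    apply young_abs_aux
    · have := hDpos u; positivity
    · positivity
    · have h1 := hCS u v
      have h2 := hDC v
      have h3 := hDpos u
      have heq : 4 * (c ^ 2 * CD ^ 2 / α * D u u) * (α / 4 * ‖v‖ ^ 2)
          = c ^ 2 * (CD ^ 2 * (D u u * ‖v‖ ^ 2)) := by field_simp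
      rw [heq]
      nlinarith [sq_nonneg c, sq_nonneg (D u v), mul_nonneg (sq_nonneg c) h3]
  -- σ2 bound
  have hDb2 : ∀ u v : Y,
      -(σ2 * D u v) ≤ σ2 ^ 2 / 2 * D u u + 1 / 2 * D v v := by
    intro u v
    have h0 := hDpos (σ2 • u + v)
    simp only [map_add, map_smul, LinearMap.add_apply, LinearMap.smul_apply,
      smul_eq_mul] at h0
    have hs := hDsymm u v
    nlinarith [h0]
  -- residual bound
  have hr : ∀ (k : ℕ) (v : Y),
      τ * (rp k) v ≤ τ / α * ‖rp k‖ ^ 2 + τ * α / 4 * ‖v‖ ^ 2 := by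
    intro k v
    have h1 : (rp k) v ≤ ‖rp k‖ * ‖v‖ := by
      calc (rp k) v ≤ |(rp k) v| := le_abs_self _
        _ = ‖(rp k) v‖ := (Real.norm_eq_abs _).symm
        _ ≤ ‖rp k‖ * ‖v‖ := (rp k).le_opNorm v
    have h2 : α * (‖rp k‖ * ‖v‖) ≤ ‖rp k‖ ^ 2 + α ^ 2 / 4 * ‖v‖ ^ 2 := by
      nlinarith [sq_nonneg (‖rp k‖ - α / 2 * ‖v‖)]
    have h3 : τ / α * (α * (‖rp k‖ * ‖v‖)) ≤ τ / α * (‖rp k‖ ^ 2 + α ^ 2 / 4 * ‖v‖ ^ 2) :=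
      mul_le_mul_of_nonneg_left h2 (by positivity)
    calc τ * (rp k) v ≤ τ * (‖rp k‖ * ‖v‖) := mul_le_mul_of_nonneg_left h1 hτ.le
      _ = τ / α * (α * (‖rp k‖ * ‖v‖)) := by field_simp
      _ ≤ τ / α * (‖rp k‖ ^ 2 + α ^ 2 / 4 * ‖v‖ ^ 2) := h3
      _ = τ / α * ‖rp k‖ ^ 2 + τ * α / 4 * ‖v‖ ^ 2 := by field_simp
  -- key per-step inequality
  have hkey : ∀ k ∈ Finset.Icc 1 (m + 1),
      (if k = m + 1 then mm (ep (m + 1)) (ep (m + 1))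
        else mm (ep k) (ep k) - mm (ep (k + 1)) (ep (k + 1))) + τ * α * ‖ep k‖ ^ 2
      ≤ 2 * (τ / α) * ‖rp k‖ ^ 2
          + 2 * (τ * (σ1 ^ 2 * CD ^ 2 / α)) * D (ey k) (ey k)
          + (if k = m + 1 then σ2 ^ 2 * D (ey (m + 1)) (ey (m + 1)) else 0) := by
    intro k hk
    simp only [Finset.mem_Icc] at hk
    have ha' : τ * (α * ‖ep k‖ ^ 2) ≤ τ * a (ep k) (ep k) :=
      mul_le_mul_of_nonneg_left (ha (ep k)) hτ.le
    have hd1 := hDb σ1 hσ1 (ey k) (ep k)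
    have hd1' : τ * -(σ1 * D (ey k) (ep k))
        ≤ τ * (σ1 ^ 2 * CD ^ 2 / α * D (ey k) (ey k) + α / 4 * ‖ep k‖ ^ 2) :=
      mul_le_mul_of_nonneg_left hd1 hτ.le
    have hrk := hr k (ep k)
    by_cases hkK : k = m + 1
    · subst hkK
      rw [if_pos rfl, if_pos rfl]
      have E := hresK (ep (m + 1))
      have hd2 := hDb2 (ey (m + 1)) (ep (m + 1))
      have hdm := hDm (ep (m + 1))
      linarith [E, hd1', hd2, hrk, ha', hdm]
    · simp only [if_neg hkK]
      have hkm : k ∈ Finset.Icc 1 m := by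
        simp only [Finset.mem_Icc]; omega
      have E := hres k hkm (ep k)
      rw [map_sub] at E
      have hm2 := hmpos (ep k - ep (k + 1))
      simp only [map_sub, LinearMap.sub_apply] at hm2
      have hs := hmsymm (ep k) (ep (k + 1))
      linarith [E, hd1', hrk, ha', hm2]
  have hsum := Finset.sum_le_sum hkey
  simp only [Finset.sum_add_distrib] at hsum
  have hL : ∑ k ∈ Finset.Icc 1 (m + 1),
      (if k = m + 1 then mm (ep (m + 1)) (ep (m + 1))
        else mm (ep k) (ep k) - mm (ep (k + 1)) (ep (k + 1))) = mm (ep 1) (ep 1) := by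
    rw [Finset.sum_Icc_succ_top (Nat.le_add_left 1 m), if_pos rfl]
    have hcong : ∑ k ∈ Finset.Icc 1 m,
        (if k = m + 1 then mm (ep (m + 1)) (ep (m + 1))
          else mm (ep k) (ep k) - mm (ep (k + 1)) (ep (k + 1)))
        = ∑ k ∈ Finset.Icc 1 m, (mm (ep k) (ep k) - mm (ep (k + 1)) (ep (k + 1))) := by
      refine Finset.sum_congr rfl fun k hk => ?_
      rw [if_neg (by simp only [Finset.mem_Icc] at hk; omega)]
    rw [hcong, telescope_aux (fun k => mm (ep k) (ep k)) m]
    ring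
  have hR : ∑ k ∈ Finset.Icc 1 (m + 1),
      (if k = m + 1 then σ2 ^ 2 * D (ey (m + 1)) (ey (m + 1)) else 0)
      = σ2 ^ 2 * D (ey (m + 1)) (ey (m + 1)) := by
    rw [Finset.sum_Icc_succ_top (Nat.le_add_left 1 m), if_pos rfl]
    have : ∑ k ∈ Finset.Icc 1 m,
        (if k = m + 1 then σ2 ^ 2 * D (ey (m + 1)) (ey (m + 1)) else 0) = 0 := by
      refine Finset.sum_eq_zero fun k hk => ?_
      rw [if_neg (by simp only [Finset.mem_Icc] at hk; omega)]
    rw [this]; ring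
  rw [hL, hR, ← Finset.mul_sum, ← Finset.mul_sum, ← Finset.mul_sum] at hsum
  have hM1 : 0 ≤ mm (ep 1) (ep 1) := hmpos _
  have heq : α * ((2 * τ / α ^ 2) * ∑ k ∈ Finset.Icc 1 (m + 1), ‖rp k‖ ^ 2
        + (2 * CD ^ 2 * σ1 ^ 2 * τ / α ^ 2) * ∑ k ∈ Finset.Icc 1 (m + 1), D (ey k) (ey k)
        + (σ2 ^ 2 / α) * D (ey (m + 1)) (ey (m + 1)))
      = 2 * (τ / α) * ∑ k ∈ Finset.Icc 1 (m + 1), ‖rp k‖ ^ 2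
        + 2 * (τ * (σ1 ^ 2 * CD ^ 2 / α)) * ∑ k ∈ Finset.Icc 1 (m + 1), D (ey k) (ey k)
        + σ2 ^ 2 * D (ey (m + 1)) (ey (m + 1)) := by
    field_simp
  have h2 : α * (τ * ∑ k ∈ Finset.Icc 1 (m + 1), ‖ep k‖ ^ 2)
      ≤ α * ((2 * τ / α ^ 2) * ∑ k ∈ Finset.Icc 1 (m + 1), ‖rp k‖ ^ 2
        + (2 * CD ^ 2 * σ1 ^ 2 * τ / α ^ 2) * ∑ k ∈ Finset.Icc 1 (m + 1), D (ey k) (ey k)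
        + (σ2 ^ 2 / α) * D (ey (m + 1)) (ey (m + 1))) := by
    rw [heq]
    linarith [hsum, hM1]
  exact le_of_mul_le_mul_left h2 hα
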